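/- Let E be a subspace of ℂ^m. If there exist f, g ∈ E with |f_j| = |g_j| for every coordinate j but f is not a unimodular multiple of g, then there exist F, G ∈ E that are orthogonal, satisfy |F_j| = |G_j| for every j, and F is not a unimodular multiple of G. -/

import Mathlib

open scoped ComplexOrder

lemma abs_helper (u v t : ℂ) (h : ‖u‖ = ‖v‖) :
    ‖u + t * v‖ = ‖(starRingEnd ℂ) t * u + v‖ := by
  have h' : Complex.normSq u = Complex.normSq v := by
    rw [← Complex.sq_norm, ← Complex.sq_norm, h]
  have h2 : Complex.normSq (u + t * v) = Complex.normSq ((starRingEnd ℂ) t * u + v) := by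
    simp only [Complex.normSq_apply, Complex.add_re, Complex.add_im, Complex.mul_re,
      Complex.mul_im, Complex.conj_re, Complex.conj_im] at *
    linear_combination (1 - t.re ^ 2 - t.im ^ 2) * h'
  rw [Complex.norm_def, Complex.norm_def, h2]


/-- If a subspace `E` of `ℂ^m` contains two vectors with entrywise equal moduli
that are not unimodular multiples of each other, then it contains two such vectors that are
moreover orthogonal. -/
theorem stmt_0 (m : ℕ) (E : Submodule ℂ (EuclideanSpace ℂ (Fin m)))
    (h : ∃ f ∈ E, ∃ g ∈ E, (∀ j, ‖f j‖ = ‖g j‖) ∧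
      ¬ ∃ c : ℂ, ‖c‖ = 1 ∧ f = c • g) :
    ∃ F ∈ E, ∃ G ∈ E, (inner ℂ F G : ℂ) = 0 ∧
      (∀ j, ‖F j‖ = ‖G j‖) ∧
      ¬ ∃ c : ℂ, ‖c‖ = 1 ∧ F = c • G := by
  obtain ⟨f, hf, g, hg, hmod, hnu⟩ := h
  have hg0 : g ≠ 0 := by
    rintro rfl
    refine hnu ⟨1, by norm_num, ?_⟩
    ext j
    have := hmod j
    simp only [map_zero, map_eq_zero, Pi.zero_apply] at this ⊢
    simpa using this
  have hf0 : f ≠ 0 := by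
    rintro rfl
    refine hg0 (PiLp.ext fun j => ?_)
    have := (hmod j).symm
    simp only [map_zero, map_eq_zero, Pi.zero_apply] at this ⊢
    simpa using this
  have hprop : ∀ lam : ℂ, f ≠ lam • g := by
    intro lam heq
    obtain ⟨j, hj⟩ : ∃ j, g j ≠ 0 := by
      by_contra h'
      push_neg at h'
      exact hg0 (PiLp.ext h')
    have h1 : ‖lam‖ * ‖g j‖ = ‖g j‖ := by
      have := hmod j
      rw [heq] at this
      simpa [norm_mul] using this
    have hlam : ‖lam‖ = 1 := by
      have hgj : ‖g j‖ ≠ 0 := by simpa using hj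
      field_simp at h1
      exact h1
    exact hnu ⟨lam, hlam, heq⟩
  have hindep : ∀ α β : ℂ, α • f = β • g → α = 0 ∧ β = 0 := by
    intro α β hab
    by_cases hα : α = 0
    · subst hα
      simp only [zero_smul] at hab
      rcases (smul_eq_zero.mp hab.symm) with hβ | hgz
      · exact ⟨rfl, hβ⟩
      · exact absurd hgz hg0
    · exfalso
      apply hprop (α⁻¹ * β)
      rw [mul_smul, ← hab, smul_smul, inv_mul_cancel₀ hα, one_smul]
  by_cases ha : (inner ℂ f g : ℂ) = 0
  · exact ⟨f, hf, g, hg, ha, hmod, hnu⟩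
  have hnormfg : ‖f‖ = ‖g‖ := by
    rw [EuclideanSpace.norm_eq, EuclideanSpace.norm_eq]
    congr 1
    exact Finset.sum_congr rfl fun j _ => by
      rw [hmod j]
  obtain ⟨a, ha_def⟩ : ∃ a : ℂ, a = (inner ℂ f g : ℂ) := ⟨_, rfl⟩
  obtain ⟨n, hn_def⟩ : ∃ n : ℝ, n = Complex.normSq a := ⟨_, rfl⟩
  obtain ⟨s, hs_def⟩ : ∃ s : ℝ, s = ‖f‖ ^ 2 + ‖g‖ ^ 2 := ⟨_, rfl⟩
  have ha0 : a ≠ 0 := by rw [ha_def]; exact ha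
  have hn0 : 0 < n := by rw [hn_def]; exact Complex.normSq_pos.mpr ha0
  have hCS : ‖a‖ < ‖f‖ * ‖g‖ := by
    rw [ha_def]
    rcases lt_or_eq_of_le (norm_inner_le_norm (𝕜 := ℂ) f g) with h' | h'
    · exact h'
    · exfalso
      obtain ⟨r, hr, hgr⟩ := (norm_inner_eq_norm_iff hf0 hg0).mp h'
      exact hprop r⁻¹ (by rw [hgr, smul_smul, inv_mul_cancel₀ hr, one_smul])
  have h4n : 4 * n < s ^ 2 := by
    have h1 : n = ‖a‖ ^ 2 := by
      rw [hn_def, ← Complex.sq_norm]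
    have hfpos : (0 : ℝ) < ‖f‖ := norm_pos_iff.mpr hf0
    have hna : 0 ≤ ‖a‖ := norm_nonneg a
    have hCS2 : ‖a‖ < ‖f‖ ^ 2 := by
      calc ‖a‖ < ‖f‖ * ‖g‖ := hCS
        _ = ‖f‖ ^ 2 := by rw [← hnormfg]; ring
    rw [h1, hs_def, ← hnormfg]
    nlinarith [hCS2, hna]
  have hs0 : 0 < s := by nlinarith
  obtain ⟨D, hD_def⟩ : ∃ D : ℝ, D = Real.sqrt (s ^ 2 - 4 * n) := ⟨_, rfl⟩
  have hD0 : 0 ≤ D := hD_def ▸ Real.sqrt_nonneg _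
  have hDsq : D ^ 2 = s ^ 2 - 4 * n := by rw [hD_def]; exact Real.sq_sqrt (by nlinarith)
  have hDlt : D < s := by nlinarith
  obtain ⟨t, ht_def⟩ : ∃ t : ℂ, t = ((D - s : ℝ) : ℂ) / (2 * a) := ⟨_, rfl⟩
  -- |t| < 1
  have hnt : Complex.normSq t < 1 := by
    have h2 : Complex.normSq (2 : ℂ) = 4 := by
      simp [Complex.normSq_apply]
      norm_num
    have hval : Complex.normSq t = (D - s) ^ 2 / (4 * n) := by
      rw [ht_def, Complex.normSq_div, Complex.normSq_mul, Complex.normSq_ofReal, h2, hn_def]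
      ring
    rw [hval, div_lt_one (by linarith)]
    -- (D-s)^2 < 4n ⟺ s - D < 2√n ⟸ (s - 2√n) < D, squares
    have hsqn : Real.sqrt n ^ 2 = n := Real.sq_sqrt hn0.le
    have hsqn0 : 0 < Real.sqrt n := Real.sqrt_pos.mpr hn0
    nlinarith [hDsq, hsqn, hsqn0, hDlt, hD0, hs0]
  -- auxiliary algebraic facts
  have hca0 : (starRingEnd ℂ) a ≠ 0 := by simpa using ha0
  have hconj_t : (starRingEnd ℂ) t = ((D - s : ℝ) : ℂ) / (2 * (starRingEnd ℂ) a) := by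
    rw [ht_def, map_div₀, map_mul, Complex.conj_ofReal]
    norm_num [map_ofNat]
  have hmc : a * (starRingEnd ℂ) a = ((n : ℝ) : ℂ) := by rw [Complex.mul_conj, hn_def]
  have hDc : ((D : ℝ) : ℂ) ^ 2 = ((s : ℝ) : ℂ) ^ 2 - 4 * ((n : ℝ) : ℂ) := by
    have := congrArg (fun x : ℝ => (x : ℂ)) hDsq
    push_cast at this ⊢
    exact this
  have key4 : (((D : ℝ) : ℂ) - ((s : ℝ) : ℂ)) * ((s : ℝ) : ℂ) * 2 + 4 * a * (starRingEnd ℂ) a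
      + (((D : ℝ) : ℂ) - ((s : ℝ) : ℂ)) ^ 2 = 0 := by
    linear_combination hDc + 4 * hmc
  have ht2 : 2 * (starRingEnd ℂ) a * (starRingEnd ℂ) t = ((D : ℝ) : ℂ) - ((s : ℝ) : ℂ) := by
    rw [hconj_t]
    push_cast
    field_simp
  have keyX : (2 * (starRingEnd ℂ) a) ^ 2 * ((starRingEnd ℂ) t * ((s : ℝ) : ℂ) + a
      + ((starRingEnd ℂ) t) ^ 2 * (starRingEnd ℂ) a) = 0 := by
    linear_combination (2 * (starRingEnd ℂ) a * ((s : ℝ) : ℂ)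
      + 2 * ((starRingEnd ℂ) a) ^ 2 * (starRingEnd ℂ) t
      + (starRingEnd ℂ) a * (((D : ℝ) : ℂ) - ((s : ℝ) : ℂ))) * ht2
      + (starRingEnd ℂ) a * key4
  have key : (starRingEnd ℂ) t * ((s : ℝ) : ℂ) + a
      + ((starRingEnd ℂ) t) ^ 2 * (starRingEnd ℂ) a = 0 := by
    rcases mul_eq_zero.mp keyX with h' | h'
    · exact absurd h' (pow_ne_zero 2 (mul_ne_zero two_ne_zero hca0))
    · exact h'
  refine ⟨f + t • g, E.add_mem hf (E.smul_mem t hg),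
    (starRingEnd ℂ) t • f + g, E.add_mem (E.smul_mem _ hf) hg, ?_, ?_, ?_⟩
  · -- orthogonality
    have hgf : (inner ℂ g f : ℂ) = (starRingEnd ℂ) a := by rw [ha_def, ← inner_conj_symm]
    have hsc : ((s : ℝ) : ℂ) = ((‖f‖ : ℂ)) ^ 2 + ((‖g‖ : ℂ)) ^ 2 := by
      rw [hs_def]; push_cast; ring
    simp only [inner_add_left, inner_add_right, inner_smul_left, inner_smul_right]
    have hff : (inner ℂ f f : ℂ) = ((‖f‖ : ℂ)) ^ 2 := by
      rw [inner_self_eq_norm_sq_to_K]; norm_cast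
    have hgg : (inner ℂ g g : ℂ) = ((‖g‖ : ℂ)) ^ 2 := by
      rw [inner_self_eq_norm_sq_to_K]; norm_cast
    rw [← ha_def, hgf, hff, hgg]
    rw [hsc] at key
    linear_combination key
  · -- moduli
    intro j
    simp only [PiLp.add_apply, PiLp.smul_apply, smul_eq_mul]
    exact abs_helper _ _ _ (hmod j)
  · -- not unimodular multiples
    rintro ⟨c, hc, hFG⟩
    have heq : (1 - c * (starRingEnd ℂ) t) • f = (c - t) • g := by
      linear_combination (norm := module) hFG
    obtain ⟨h1, h2⟩ := hindep _ _ heq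
    have hct : c * (starRingEnd ℂ) t = 1 := by
      have h1' := sub_eq_zero.mp h1
      exact h1'.symm
    have hc_t : c = t := sub_eq_zero.mp h2
    rw [hc_t, Complex.mul_conj] at hct
    have : Complex.normSq t = 1 := by exact_mod_cast hct
    linarith
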